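/- arXiv:1705.10113 — 2 statements merged into one kernel-verified Lean document; each statement's English description precedes it below -/
import Mathlib

section
/- Let t ≥ 27, k ∈ {t-1,t}, and let s ≥ t+k+1 satisfy s ≡ t+k-1 (mod 2). Then g_{⌈(s+1)/2⌉, ⌊(s+1)/2⌋} > g_{t,k} + g(s,t,k). -/
def bin3 (n : ℤ) : ℤ := n*(n-1)*(n-2)/6
def dtk (t k : ℤ) : ℤ := t*(t+1)/2 + k*(k+1)/2
def gtk (t k : ℤ) : ℤ := 2 + t*(t+1)*(2*t-5)/6 + k*(k+1)*(2*k-5)/6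
def cc (s t k : ℤ) : ℤ := Int.fdiv (bin3 (s+3) - s * dtk t k - 6 - 3*(s-t-k-1)/2 + gtk t k) (s-1)
def dd (s t k : ℤ) : ℤ := bin3 (s+3) - s * dtk t k - 6 - 3*(s-t-k-1)/2 + gtk t k - (s-1) * cc s t k
def gg (s t k : ℤ) : ℤ := cc s t k - 3 - 3*(s-t-k-1)/2

lemma six_dvd_consec (n : ℤ) : (6:ℤ) ∣ n*(n-1)*(n-2) := by
  have : ((n*(n-1)*(n-2) : ℤ) : ZMod 6) = 0 := by
    push_cast
    generalize (n : ZMod 6) = x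
    revert x; decide
  exact (ZMod.intCast_zmod_eq_zero_iff_dvd _ 6).mp this

lemma six_dvd_g (a : ℤ) : (6:ℤ) ∣ a*(a+1)*(2*a-5) := by
  have : ((a*(a+1)*(2*a-5) : ℤ) : ZMod 6) = 0 := by
    push_cast
    generalize (a : ZMod 6) = x
    revert x; decide
  exact (ZMod.intCast_zmod_eq_zero_iff_dvd _ 6).mp this

lemma two_dvd_g (a : ℤ) : (2:ℤ) ∣ a*(a+1) := by
  have : ((a*(a+1) : ℤ) : ZMod 2) = 0 := by
    push_cast
    generalize (a : ZMod 2) = x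
    revert x; decide
  exact (ZMod.intCast_zmod_eq_zero_iff_dvd _ 2).mp this

lemma mul_ediv_le' (a b : ℤ) (h : 0 < b) : b * (a / b) ≤ a := by
  have h1 := Int.mul_ediv_add_emod a b
  have h2 := Int.emod_nonneg a h.ne'
  linarith

lemma gtk_val (a : ℤ) {u : ℤ} (hu : a*(a+1)*(2*a-5) = 6*u) : gtk a a = 2 + 2*u := by
  unfold gtk; rw [hu]; omega

lemma case_eq (t m : ℤ) (ht : 27 ≤ t) (hm : 1 ≤ m) :
    gtk t t + gg (2*t-1+2*m) t t < gtk (t+m) (t+m) := by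
  obtain ⟨B, hB⟩ := six_dvd_consec (2*t+2+2*m)
  obtain ⟨p, hp⟩ := two_dvd_g t
  obtain ⟨u, hu⟩ := six_dvd_g t
  obtain ⟨w, hw⟩ := six_dvd_g (t+m)
  have hgtk1 : gtk t t = 2 + 2*u := gtk_val t hu
  have hgtk2 : gtk (t+m) (t+m) = 2 + 2*w := gtk_val (t+m) hw
  have hdtk : dtk t t = 2*p := by unfold dtk; rw [hp]; omega
  have hbin : bin3 (2*t-1+2*m+3) = B := by
    have h : (2*t-1+2*m+3)*((2*t-1+2*m+3)-1)*((2*t-1+2*m+3)-2) = 6*B := by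
      linear_combination hB
    unfold bin3; rw [h]; exact Int.mul_ediv_cancel_left B (by norm_num)
  have h1 : 3*(2*t-1+2*m-t-t-1)/2 = 3*m-3 := by omega
  have hccval : cc (2*t-1+2*m) t t
      = Int.fdiv (B - 2*(2*t-1+2*m)*p - 3*m - 1 + 2*u) (2*t-1+2*m-1) := by
    unfold cc
    rw [hbin, hdtk, hgtk1, h1]
    congr 1; ring
  have hspos : (0:ℤ) < 2*t-1+2*m-1 := by linarith
  have hub : (2*t-1+2*m-1) * cc (2*t-1+2*m) t t
      ≤ B - 2*(2*t-1+2*m)*p - 3*m - 1 + 2*u := by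
    rw [hccval, Int.fdiv_eq_ediv_of_nonneg _ hspos.le]
    exact mul_ediv_le' _ _ hspos
  have ha : (0:ℤ) ≤ t - 27 := by linarith
  have hb : (0:ℤ) ≤ m - 1 := by linarith
  have hN : B - 2*(2*t-1+2*m)*p - 3*m - 1 + 2*u
      < (2*t-1+2*m-1) * (2*w - 2*u + 3*m) := by
    nlinarith [hB, hp, hu, hw, mul_nonneg ha hb, mul_nonneg (mul_nonneg ha ha) hb,
      mul_nonneg (mul_nonneg (mul_nonneg ha ha) ha) hb,
      mul_nonneg (mul_nonneg ha hb) hb, mul_nonneg (mul_nonneg (mul_nonneg ha ha) hb) hb,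
      mul_nonneg (mul_nonneg (mul_nonneg ha hb) hb) hb,
      mul_nonneg (mul_nonneg (mul_nonneg hb hb) hb) hb,
      mul_nonneg ha ha, mul_nonneg hb hb, mul_nonneg (mul_nonneg ha ha) ha,
      mul_nonneg (mul_nonneg hb hb) hb]
  have hcclt : cc (2*t-1+2*m) t t < 2*w - 2*u + 3*m := by
    by_contra hcon
    push_neg at hcon
    have := mul_le_mul_of_nonneg_left hcon hspos.le
    linarith
  unfold gg
  rw [h1, hgtk1, hgtk2]
  linarith

set_option maxHeartbeats 1600000 in
lemma case_eq2 (t m : ℤ) (ht : 27 ≤ t) (hm : 1 ≤ m) :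
    gtk t (t-1) + gg (2*t-2+2*m) t (t-1) < gtk (t+m) (t+m-1) := by
  obtain ⟨B, hB⟩ := six_dvd_consec (2*t+1+2*m)
  obtain ⟨p, hp⟩ := two_dvd_g t
  obtain ⟨q, hq⟩ := two_dvd_g (t-1)
  obtain ⟨u, hu⟩ := six_dvd_g t
  obtain ⟨v, hv⟩ := six_dvd_g (t-1)
  obtain ⟨w, hw⟩ := six_dvd_g (t+m)
  obtain ⟨x, hx⟩ := six_dvd_g (t+m-1)
  have hgtk1 : gtk t (t-1) = 2 + u + v := by unfold gtk; rw [hu, hv]; omega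
  have hgtk2 : gtk (t+m) (t+m-1) = 2 + w + x := by unfold gtk; rw [hw, hx]; omega
  have hdtk : dtk t (t-1) = p + q := by unfold dtk; rw [hp, hq]; omega
  have hbin : bin3 (2*t-2+2*m+3) = B := by
    have h : (2*t-2+2*m+3)*((2*t-2+2*m+3)-1)*((2*t-2+2*m+3)-2) = 6*B := by
      linear_combination hB
    unfold bin3; rw [h]; exact Int.mul_ediv_cancel_left B (by norm_num)
  have h1 : 3*(2*t-2+2*m-t-(t-1)-1)/2 = 3*m-3 := by omega
  have hccval : cc (2*t-2+2*m) t (t-1)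
      = Int.fdiv (B - (2*t-2+2*m)*(p+q) - 3*m - 1 + u + v) (2*t-2+2*m-1) := by
    unfold cc
    rw [hbin, hdtk, hgtk1, h1]
    congr 1; ring
  have hspos : (0:ℤ) < 2*t-2+2*m-1 := by linarith
  have hub : (2*t-2+2*m-1) * cc (2*t-2+2*m) t (t-1)
      ≤ B - (2*t-2+2*m)*(p+q) - 3*m - 1 + u + v := by
    rw [hccval, Int.fdiv_eq_ediv_of_nonneg _ hspos.le]
    exact mul_ediv_le' _ _ hspos
  have ha : (0:ℤ) ≤ t - 27 := by linarith
  have hb : (0:ℤ) ≤ m - 1 := by linarith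
  have hN : B - (2*t-2+2*m)*(p+q) - 3*m - 1 + u + v
      < (2*t-2+2*m-1) * (w + x - u - v + 3*m) := by
    nlinarith [hB, hp, hq, hu, hv, hw, hx, mul_nonneg ha hb, mul_nonneg (mul_nonneg ha ha) hb,
      mul_nonneg (mul_nonneg (mul_nonneg ha ha) ha) hb,
      mul_nonneg (mul_nonneg ha hb) hb, mul_nonneg (mul_nonneg (mul_nonneg ha ha) hb) hb,
      mul_nonneg (mul_nonneg (mul_nonneg ha hb) hb) hb,
      mul_nonneg (mul_nonneg (mul_nonneg hb hb) hb) hb,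
      mul_nonneg ha ha, mul_nonneg hb hb, mul_nonneg (mul_nonneg ha ha) ha,
      mul_nonneg (mul_nonneg hb hb) hb]
  have hcclt : cc (2*t-2+2*m) t (t-1) < w + x - u - v + 3*m := by
    by_contra hcon
    push_neg at hcon
    have := mul_le_mul_of_nonneg_left hcon hspos.le
    linarith
  unfold gg
  rw [h1, hgtk1, hgtk2]
  linarith

theorem stmt8 (t k s : ℤ) (ht : 27 ≤ t) (hk : k = t - 1 ∨ k = t)
    (hs : t + k + 1 ≤ s) (hpar : (2:ℤ) ∣ (s - (t+k-1))) :
    gtk t k + gg s t k < gtk ((s+2)/2) ((s+1)/2) := by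
  obtain ⟨m, hm⟩ := hpar
  rcases hk with hk | hk <;> subst hk
  · have hm1 : 1 ≤ m := by omega
    have hs' : s = 2*t-2+2*m := by omega
    subst hs'
    have e1 : (2*t-2+2*m+2)/2 = t+m := by omega
    have e2 : (2*t-2+2*m+1)/2 = t+m-1 := by omega
    rw [e1, e2]
    exact case_eq2 t m ht hm1
  · have hm1 : 1 ≤ m := by omega
    have hs' : s = 2*k-1+2*m := by omega
    subst hs'
    have e1 : (2*k-1+2*m+2)/2 = k+m := by omega
    have e2 : (2*k-1+2*m+1)/2 = k+m := by omega
    rw [e1, e2]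
    exact case_eq k m ht hm1
end

section
/- Let t ≥ 27, k ∈ {t-1,t}, y ≥ t+k+5 with y ≡ t+k-1 (mod 2), and let g satisfy g_{t,k} + g(y,t,k) ≤ g ≤ g_{t,k} + g(y+2,t,k) - 1. Define a(y+2) and b(y+2) by (y+2)·d_{t,k} + 3 - g + (y+2)·a(y+2) + b(y+2) = binom(y+5,3) with 0 ≤ b(y+2) ≤ y+1. Then a(y+2) ≥ g - g_{t,k} + 3. -/
lemma fdiv_le' (N D : ℤ) (hD : 0 < D) : D * Int.fdiv N D ≤ N := by
  rw [Int.fdiv_eq_ediv_of_nonneg _ hD.le]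
  have h1 := Int.mul_ediv_add_emod N D
  have h2 := Int.emod_nonneg N hD.ne'
  omega

theorem stmt14 (t k y g : ℤ) (ht : 27 ≤ t) (hk : k = t - 1 ∨ k = t)
    (hy : t + k + 5 ≤ y) (hpar : (2:ℤ) ∣ (y - (t+k-1)))
    (hg1 : gtk t k + gg y t k ≤ g) (hg2 : g ≤ gtk t k + gg (y+2) t k - 1)
    (a b : ℤ)
    (hab : (y+2) * dtk t k + 3 - g + (y+2) * a + b = bin3 (y+5))
    (hb0 : 0 ≤ b) (hb1 : b ≤ y + 1) :
    g - gtk t k + 3 ≤ a := by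
  obtain ⟨m, hm⟩ := hpar
  have hm3 : 3 ≤ m := by omega
  have hdiv : 3*((y+2)-t-k-1)/2 = 3*m := by omega
  have hc : ((y+2)-1) * cc (y+2) t k ≤
      bin3 ((y+2)+3) - (y+2) * dtk t k - 6 - 3*((y+2)-t-k-1)/2 + gtk t k := by
    have := fdiv_le' (bin3 ((y+2)+3) - (y+2) * dtk t k - 6 - 3*((y+2)-t-k-1)/2 + gtk t k)
      ((y+2)-1) (by omega)
    simpa [cc] using this
  have h5 : (y+2)+3 = y+5 := by ring
  have h1 : (y+2)-1 = y+1 := by ring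
  rw [h5, h1, hdiv] at hc
  simp only [gg, hdiv] at hg2
  set c := cc (y+2) t k with hcdef
  -- hc : (y+1)*c ≤ bin3 (y+5) - (y+2)*dtk - 6 - 3m + gtk
  -- hg2 : g ≤ gtk + (c - 3 - 3m) - 1
  have hy2 : (0:ℤ) < y + 2 := by omega
  have key1 : (y+1) * (c - (g - gtk t k + 3*m + 4)) ≥ 0 := by
    have h0 : 0 ≤ c - (g - gtk t k + 3*m + 4) := by omega
    exact mul_nonneg (by omega) h0
  nlinarith [mul_pos hy2 hy2, mul_le_mul_of_nonneg_left (show a ≤ a from le_refl a) hy2.le]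
end
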